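/- Let (X,d) be a US-space. Then the set D₀(X) of nonzero distances has no least element if and only if for every labeled star graph S(l) generating (X,d), the self-isometry group of (X,d) coincides with the self-isomorphism group of S(l). -/

import Mathlib

def IsUltrametric {X : Type*} (d : X → X → NNReal) : Prop :=
  (∀ x y, d x y = d y x) ∧ (∀ x y, d x y = 0 ↔ x = y) ∧
    ∀ x y z, d x y ≤ max (d x z) (d z y)

def IsStarCenter {V : Type*} (S : SimpleGraph V) (c : V) : Prop :=
  (∀ v, v ≠ c → S.Adj c v) ∧ ∀ u w, u ≠ c → w ≠ c → ¬S.Adj u w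

def starDist {V : Type*} [DecidableEq V] (c : V) (l : V → NNReal) (u v : V) : NNReal :=
  if u = v then 0
  else if u = c then max (l c) (l v)
  else if v = c then max (l u) (l c)
  else max (l u) (max (l c) (l v))

/-- The set of nonzero distances of `(X, d)`. -/
def D0 {X : Type*} (d : X → X → NNReal) : Set NNReal :=
  {r | ∃ x y : X, x ≠ y ∧ d x y = r}

lemma max3aux {a b e : NNReal} (h : e ≤ max a b) : max b (max a e) = max b a := by
  rw [← max_assoc]
  exact max_eq_left (by rwa [max_comm] at h)

lemma swap_isometry {X : Type*} [DecidableEq X] (d : X → X → NNReal) (c w : X) (l : X → NNReal)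
    (hgen : ∀ u v, d u v = starDist c l u v) (hwc : w ≠ c)
    (hcond : ∀ y, y ≠ c → y ≠ w → l w ≤ max (l c) (l y)) :
    ∀ x y, d (Equiv.swap c w x) (Equiv.swap c w y) = d x y := by
  have hsc : Equiv.swap c w c = w := Equiv.swap_apply_left c w
  have hsw : Equiv.swap c w w = c := Equiv.swap_apply_right c w
  have hso : ∀ z, z ≠ c → z ≠ w → Equiv.swap c w z = z := fun z h1 h2 =>
    Equiv.swap_apply_of_ne_of_ne h1 h2
  have e0 : ∀ z, starDist c l z z = 0 := fun z => by simp [starDist]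
  have e1 : ∀ z, z ≠ c → starDist c l c z = max (l c) (l z) := fun z hz => by
    simp [starDist, Ne.symm hz]
  have e3 : ∀ u, u ≠ c → starDist c l u c = max (l u) (l c) := fun u hu => by
    simp [starDist, hu]
  have e2 : ∀ u z, u ≠ c → z ≠ c → u ≠ z →
      starDist c l u z = max (l u) (max (l c) (l z)) := by
    intro u z h1 h2 h3
    simp [starDist, h1, h2, h3]
  intro x y
  simp only [hgen]
  by_cases hx1 : x = c
  · by_cases hy1 : y = c
    · rw [hx1, hy1, hsc, e0, e0]
    · by_cases hy2 : y = w
      · rw [hx1, hy2, hsc, hsw, e3 w hwc, e1 w hwc, max_comm]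
      · rw [hx1, hsc, hso y hy1 hy2, e2 w y hwc hy1 (Ne.symm hy2), e1 y hy1]
        exact max_eq_right (hcond y hy1 hy2)
  · by_cases hx2 : x = w
    · by_cases hy1 : y = c
      · rw [hx2, hy1, hsw, hsc, e1 w hwc, e3 w hwc, max_comm]
      · by_cases hy2 : y = w
        · rw [hx2, hy2, hsw, e0, e0]
        · rw [hx2, hsw, hso y hy1 hy2, e1 y hy1, e2 w y hwc hy1 (Ne.symm hy2)]
          exact (max_eq_right (hcond y hy1 hy2)).symm
    · by_cases hy1 : y = c
      · rw [hy1, hso x hx1 hx2, hsc, e2 x w hx1 hwc hx2, e3 x hx1]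
        exact max3aux (hcond x hx1 hx2)
      · by_cases hy2 : y = w
        · rw [hy2, hso x hx1 hx2, hsw, e3 x hx1, e2 x w hx1 hwc hx2]
          exact (max3aux (hcond x hx1 hx2)).symm
        · rw [hso x hx1 hx2, hso y hy1 hy2]

theorem stmt15 {X : Type*} [DecidableEq X] (d : X → X → NNReal)
    (hd : IsUltrametric d)
    (hUS : ∃ (S : SimpleGraph X) (c : X) (l : X → NNReal),
      IsStarCenter S c ∧ (∀ u v, S.Adj u v → 0 < max (l u) (l v)) ∧
        ∀ u v, d u v = starDist c l u v) :
    (∀ r ∈ D0 d, ∃ s ∈ D0 d, s < r) ↔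
      ∀ (S : SimpleGraph X) (c : X) (l : X → NNReal),
        IsStarCenter S c → (∀ u v, S.Adj u v → 0 < max (l u) (l v)) →
          (∀ u v, d u v = starDist c l u v) →
            ∀ F : X ≃ X,
              (∀ x y : X, d (F x) (F y) = d x y) ↔
                ((∀ u v : X, S.Adj u v ↔ S.Adj (F u) (F v)) ∧
                  ∀ v : X, l (F v) = l v) := by
  constructor
  · -- forward direction
    intro hmin S c l hstar hnd hgen F
    have hdc : ∀ v, v ≠ c → d c v = max (l c) (l v) := by
      intro v hv
      rw [hgen]
      simp [starDist, Ne.symm hv]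
    have hduv : ∀ u v, u ≠ c → v ≠ c → u ≠ v → d u v = max (l u) (max (l c) (l v)) := by
      intro u v hu hv huv
      rw [hgen]
      simp [starDist, hu, hv, huv]
    -- every non-center label exceeds the center label
    have key : ∀ v, v ≠ c → l c < l v := by
      by_contra h
      push_neg at h
      obtain ⟨v, hv, hle⟩ := h
      have hm : 0 < l c := by
        have := hnd c v (hstar.1 v hv)
        rwa [max_eq_left hle] at this
      have hdcv : d c v = l c := by rw [hdc v hv, max_eq_left hle]
      have hlow : ∀ x y : X, x ≠ y → l c ≤ d x y := by
        intro x y hxy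
        by_cases hx : x = c
        · have hy : y ≠ c := fun h => hxy (hx.trans h.symm)
          rw [hx, hdc y hy]
          exact le_max_left _ _
        · by_cases hy : y = c
          · rw [hy, hd.1 x c, hdc x hx]
            exact le_max_left _ _
          · rw [hduv x y hx hy hxy]
            exact le_trans (le_max_left _ _) (le_max_right _ _)
      obtain ⟨s, hs, hslt⟩ := hmin (l c) ⟨c, v, Ne.symm hv, hdcv⟩
      obtain ⟨x, y, hxy, rfl⟩ := hs
      exact absurd hslt (not_lt.2 (hlow x y hxy))
    have hdc' : ∀ v, v ≠ c → d c v = l v := fun v hv => by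
      rw [hdc v hv, max_eq_right (key v hv).le]
    have hduv' : ∀ u v, u ≠ c → v ≠ c → u ≠ v → d u v = max (l u) (l v) := by
      intro u v hu hv huv
      rw [hduv u v hu hv huv, max_eq_right (key v hv).le]
    have adj_iff : ∀ u v, S.Adj u v ↔ (u ≠ v ∧ (u = c ∨ v = c)) := by
      intro u v
      constructor
      · intro h
        refine ⟨h.ne, ?_⟩
        by_contra hcc
        push_neg at hcc
        exact hstar.2 u v hcc.1 hcc.2 h
      · rintro ⟨hne, rfl | rfl⟩
        · exact hstar.1 v (Ne.symm hne)
        · exact (hstar.1 u hne).symm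
    constructor
    · -- isometry implies self-isomorphism
      intro hiso
      have hFc : F c = c := by
        by_contra hFc
        have hcz : ∀ z, z ≠ c → l (F c) ≤ d c z := by
          intro z hz
          rw [← hiso c z]
          by_cases hFz : F z = c
          · rw [hFz, hd.1 (F c) c, hdc (F c) hFc]
            exact le_max_right _ _
          · have hne : F c ≠ F z := fun h => hz (F.injective h).symm
            rw [hduv (F c) (F z) hFc hFz hne]
            exact le_max_left _ _
        have hlow : ∀ x y : X, x ≠ y → l (F c) ≤ d x y := by
          intro x y hxy
          by_cases hx : x = c
          · rw [hx]
            exact hcz y (fun h => hxy (hx.trans h.symm))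
          by_cases hy : y = c
          · rw [hy, hd.1 x c]
            exact hcz x hx
          · calc l (F c) ≤ d c x := hcz x hx
              _ = l x := hdc' x hx
              _ ≤ d x y := by
                  rw [hduv x y hx hy hxy]
                  exact le_max_left _ _
        have hmem : l (F c) ∈ D0 d := ⟨c, F c, Ne.symm hFc, hdc' (F c) hFc⟩
        obtain ⟨s, hs, hslt⟩ := hmin _ hmem
        obtain ⟨x, y, hxy, rfl⟩ := hs
        exact absurd hslt (not_lt.2 (hlow x y hxy))
      have hlab : ∀ v, l (F v) = l v := by
        intro v
        rcases eq_or_ne v c with rfl | hv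
        · rw [hFc]
        · have hFv : F v ≠ c := fun h => hv (F.injective (h.trans hFc.symm))
          rw [← hdc' (F v) hFv, ← hFc, hiso, hdc' v hv]
      refine ⟨fun u v => ?_, hlab⟩
      have hcx : ∀ z : X, F z = c ↔ z = c := fun z =>
        ⟨fun h => F.injective (h.trans hFc.symm), fun h => by rw [h]; exact hFc⟩
      simp only [adj_iff, hcx, ne_eq, EmbeddingLike.apply_eq_iff_eq]
    · -- self-isomorphism implies isometry
      rintro ⟨hadj, hlab⟩
      by_cases hFc : F c = c
      · intro x y
        have hcx : ∀ z : X, (F z = c) = (z = c) := fun z =>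
          propext ⟨fun h => F.injective (h.trans hFc.symm), fun h => by rw [h]; exact hFc⟩
        have hinj : ∀ a b : X, (F a = F b) = (a = b) := fun a b =>
          propext ⟨fun h => F.injective h, fun h => by rw [h]⟩
        rw [hgen, hgen]
        simp only [starDist, hcx, hinj, hlab]
      · have hall : ∀ x : X, x = c ∨ F x = c := by
          intro x
          by_contra h
          push_neg at h
          exact hstar.2 (F c) (F x) hFc h.2 ((hadj c x).1 (hstar.1 x h.1))
        have hFb : F (F c) = c := (hall (F c)).resolve_left hFc
        have hall' : ∀ x : X, x = c ∨ x = F c := by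
          intro x
          rcases hall x with h | h
          · exact Or.inl h
          · exact Or.inr (F.injective (h.trans hFb.symm))
        have h0 : ∀ z : X, d z z = 0 := fun z => (hd.2.1 z z).2 rfl
        intro x y
        rcases hall' x with hx | hx <;> rcases hall' y with hy | hy <;> rw [hx, hy]
        · rw [h0, h0]
        · rw [hFb, hd.1 (F c) c]
        · rw [hFb, hd.1 c (F c)]
        · rw [h0, h0]
  · -- backward direction
    intro hrhs r hr
    obtain ⟨S, c, l, hstar, hnd, hgen⟩ := hUS
    by_contra hno
    push_neg at hno
    obtain ⟨x, y, hxy, rfl⟩ := hr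
    have hdc : ∀ v, v ≠ c → d c v = max (l c) (l v) := by
      intro v hv
      rw [hgen]
      simp [starDist, Ne.symm hv]
    have hduv : ∀ u v, u ≠ c → v ≠ c → u ≠ v → d u v = max (l u) (max (l c) (l v)) := by
      intro u v hu hv huv
      rw [hgen]
      simp [starDist, hu, hv, huv]
    have adj_iff : ∀ u v, S.Adj u v ↔ (u ≠ v ∧ (u = c ∨ v = c)) := by
      intro u v
      constructor
      · intro h
        refine ⟨h.ne, ?_⟩
        by_contra hcc
        push_neg at hcc
        exact hstar.2 u v hcc.1 hcc.2 h
      · rintro ⟨hne, rfl | rfl⟩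
        · exact hstar.1 v (Ne.symm hne)
        · exact (hstar.1 u hne).symm
    by_cases hA : ∃ w, w ≠ c ∧ l w ≤ l c
    · -- some non-center label is at most the center label
      obtain ⟨w, hw, hwle⟩ := hA
      have hm : 0 < l c := by
        have := hnd c w (hstar.1 w hw)
        rwa [max_eq_left hwle] at this
      set l' : X → NNReal := Function.update l w 0 with hl'
      have hl'c : l' c = l c := Function.update_of_ne (Ne.symm hw) _ _
      have hl'w : l' w = 0 := Function.update_self _ _ _
      have hl'v : ∀ v, v ≠ w → l' v = l v := fun v hv => Function.update_of_ne hv _ _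
      have hkey : ∀ v, max (l c) (l v) = max (l' c) (l' v) := by
        intro v
        by_cases hv : v = w
        · rw [hv, hl'c, hl'w, max_eq_left hwle]
          exact (max_eq_left zero_le).symm
        · rw [hl'c, hl'v v hv]
      have hkey2 : ∀ u v : X, u ≠ v →
          max (l u) (max (l c) (l v)) = max (l' u) (max (l' c) (l' v)) := by
        intro u v huv
        by_cases hu : u = w
        · have hv : v ≠ w := fun h => huv (hu.trans h.symm)
          rw [hu, hl'w, hl'c, hl'v v hv,
            max_eq_right (le_trans hwle (le_max_left _ _))]
          exact (max_eq_right zero_le).symm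
        by_cases hv : v = w
        · rw [hv, hl'w, hl'c, hl'v u hu, max_eq_left hwle]
          exact congrArg (max (l u)) (max_eq_left zero_le).symm
        · rw [hl'v u hu, hl'c, hl'v v hv]
      have hgen' : ∀ u v, d u v = starDist c l' u v := by
        intro u v
        rw [hgen]
        unfold starDist
        split_ifs with h1 h2 h3
        · rfl
        · exact hkey v
        · rw [max_comm (l u) (l c), max_comm (l' u) (l' c)]
          exact hkey u
        · exact hkey2 u v h1
      have hnd' : ∀ u v, S.Adj u v → 0 < max (l' u) (l' v) := by
        intro u v h
        rcases ((adj_iff u v).1 h).2 with h' | h'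
        · rw [h']
          exact lt_of_lt_of_le hm (le_trans hl'c.ge (le_max_left _ _))
        · rw [h']
          exact lt_of_lt_of_le hm (le_trans hl'c.ge (le_max_right _ _))
      have hiso := swap_isometry d c w l hgen hw
        (fun y _ _ => le_trans hwle (le_max_left _ _))
      have hlabc := ((hrhs S c l' hstar hnd' hgen' (Equiv.swap c w)).1 hiso).2 c
      rw [Equiv.swap_apply_left, hl'w, hl'c] at hlabc
      exact hm.ne' hlabc.symm
    · -- all non-center labels exceed the center label
      push_neg at hA
      have hdc' : ∀ v, v ≠ c → d c v = l v := fun v hv => by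
        rw [hdc v hv, max_eq_right (hA v hv).le]
      have hduv' : ∀ u v, u ≠ c → v ≠ c → u ≠ v → d u v = max (l u) (l v) := by
        intro u v hu hv huv
        rw [hduv u v hu hv huv, max_eq_right (hA v hv).le]
      obtain ⟨a, hac, har⟩ : ∃ a, a ≠ c ∧ l a = d x y := by
        by_cases hx : x = c
        · have hy : y ≠ c := fun h => hxy (hx.trans h.symm)
          exact ⟨y, hy, by rw [hx, hdc' y hy]⟩
        by_cases hy : y = c
        · exact ⟨x, hx, by rw [hy, hd.1 x c, hdc' x hx]⟩
        · rcases max_cases (l x) (l y) with ⟨h1, _⟩ | ⟨h1, _⟩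
          · exact ⟨x, hx, by rw [hduv' x y hx hy hxy, h1]⟩
          · exact ⟨y, hy, by rw [hduv' x y hx hy hxy, h1]⟩
      have hcond : ∀ z, z ≠ c → z ≠ a → l a ≤ max (l c) (l z) := by
        intro z hz _
        rw [har]
        exact le_trans (hno (d c z) ⟨c, z, Ne.symm hz, rfl⟩) (hdc z hz).le
      have hiso := swap_isometry d c a l hgen hac hcond
      have hlabc := ((hrhs S c l hstar hnd hgen (Equiv.swap c a)).1 hiso).2 c
      rw [Equiv.swap_apply_left] at hlabc
      exact (hA a hac).ne' hlabc
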